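/- arXiv:0901.1342 — 2 statements merged into one kernel-verified Lean document; each statement's English description precedes it below -/
import Mathlib

section
/- Suppose (1/t)·log R_t(θ) → −h(θ) uniformly in θ on a measurable set G ⊆ Θ with Π₀(G) > 0, P-almost surely, where h ≥ 0 is measurable. Then P-almost surely, limsup_t (1/t)·log ∫_G R_t(θ) dΠ₀(θ) ≤ −essinf_{θ∈G} h(θ). -/
open MeasureTheory Filter
open scoped ENNReal

/-- If `(1/t) log R_t(θ) → −h(θ)` uniformly in `θ` on a set `G` of positive
prior measure (P-a.s.), then P-a.s.
`limsup (1/t) log ∫_G R_t dΠ₀ ≤ −essinf_{θ∈G} h(θ)`. -/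
theorem limsup_integrated_likelihood_on_good_set
    {Θ Ω : Type*} [MeasurableSpace Θ] [MeasurableSpace Ω]
    (P : Measure Ω) [IsProbabilityMeasure P]
    (prior : Measure Θ) [IsProbabilityMeasure prior]
    (R : ℕ → Θ → Ω → ℝ)
    (hRmeas : ∀ t, Measurable (Function.uncurry (R t)))
    (hRnn : ∀ t θ ω, 0 ≤ R t θ ω)
    (h : Θ → ℝ) (hhmeas : Measurable h) (hhnn : ∀ θ, 0 ≤ h θ)
    (G : Set Θ) (hGmeas : MeasurableSet G) (hGpos : prior G ≠ 0)
    (hG : ℝ)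
    -- `hG` is the essential infimum of `h` over `G` (w.r.t. `prior`):
    (hG_le : ∀ᵐ θ ∂prior.restrict G, hG ≤ h θ)
    (hG_approx : ∀ ε > (0 : ℝ), prior.restrict G {θ | h θ < hG + ε} ≠ 0)
    -- a.s. uniform convergence of the time-averaged log-likelihood ratio on G:
    (hunif : ∀ᵐ ω ∂P,
      TendstoUniformlyOn (fun (t : ℕ) (θ : Θ) => Real.log (R t θ ω) / t)
        (fun θ => -h θ) atTop G) :
    ∀ᵐ ω ∂P,
      limsup (fun t : ℕ => Real.log (∫ θ in G, R t θ ω ∂prior) / t) atTop ≤ -hG := by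
  -- hG is nonnegative
  have hGnn : 0 ≤ hG := by
    by_contra hneg
    push_neg at hneg
    have h1 := hG_approx (-hG) (by linarith)
    have h2 : {θ | h θ < hG + -hG} = ∅ := by
      ext θ; simp only [Set.mem_setOf_eq, Set.mem_empty_iff_false, iff_false, not_lt]
      linarith [hhnn θ]
    rw [h2] at h1
    simp at h1
  have posA : ∀ δ : ℝ, 0 < δ → 0 < (prior (G ∩ {θ | h θ < hG + δ})).toReal := by
    intro δ hδ
    have h1 := hG_approx δ hδ
    rw [Measure.restrict_apply (measurableSet_lt hhmeas measurable_const)] at h1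
    rw [Set.inter_comm] at h1
    exact ENNReal.toReal_pos h1 (measure_ne_top prior _)
  filter_upwards [hunif] with ω hu
  have hmeasθ : ∀ t : ℕ, Measurable fun θ => R t θ ω := fun t =>
    (hRmeas t).comp (measurable_id.prodMk measurable_const)
  have hest : ∀ δ : ℝ, 0 < δ → ∀ᶠ t : ℕ in atTop,
      1 ≤ t ∧ ∀ θ ∈ G, |Real.log (R t θ ω) / t - (-h θ)| < δ := by
    intro δ hδ
    have h1 := Metric.tendstoUniformlyOn_iff.mp hu δ hδ
    filter_upwards [h1, eventually_ge_atTop 1] with t h2 h3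
    refine ⟨h3, fun θ hθ => ?_⟩
    have := h2 θ hθ
    rw [Real.dist_eq, abs_sub_comm] at this
    exact this
  have upperI : ∀ δ : ℝ, 0 < δ → ∀ t : ℕ, 1 ≤ t →
      (∀ θ ∈ G, |Real.log (R t θ ω) / t - (-h θ)| < δ) →
      IntegrableOn (fun θ => R t θ ω) G prior ∧
        ∫ θ in G, R t θ ω ∂prior ≤ Real.exp (t * (-hG + δ)) := by
    intro δ hδ t ht1 hbd
    have ht0 : (0:ℝ) < t := by exact_mod_cast ht1
    have hub : ∀ᵐ θ ∂prior.restrict G, R t θ ω ≤ Real.exp (t * (-hG + δ)) := by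
      filter_upwards [hG_le, ae_restrict_mem hGmeas] with θ hθ1 hθG
      rcases (hRnn t θ ω).eq_or_lt with h0 | hpos
      · rw [← h0]; exact (Real.exp_pos _).le
      · have hb := abs_lt.mp (hbd θ hθG)
        have h2 : Real.log (R t θ ω) / t < -h θ + δ := by linarith [hb.2]
        have h3 : Real.log (R t θ ω) < t * (-hG + δ) := by
          have h4 := (div_lt_iff₀ ht0).mp h2
          nlinarith
        calc R t θ ω = Real.exp (Real.log (R t θ ω)) := (Real.exp_log hpos).symm
          _ ≤ _ := Real.exp_le_exp.mpr h3.le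
    have hint : IntegrableOn (fun θ => R t θ ω) G prior := by
      refine Integrable.mono' (integrable_const (Real.exp (t * (-hG + δ))))
        (hmeasθ t).aestronglyMeasurable ?_
      filter_upwards [hub] with θ hθ
      rw [Real.norm_of_nonneg (hRnn t θ ω)]; exact hθ
    refine ⟨hint, ?_⟩
    have hG1 : (prior G).toReal ≤ 1 := by
      have := prob_le_one (μ := prior) (s := G)
      simpa using ENNReal.toReal_mono ENNReal.one_ne_top this
    calc ∫ θ in G, R t θ ω ∂prior
        ≤ ∫ _ in G, Real.exp (t * (-hG + δ)) ∂prior :=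
          integral_mono_ae hint (integrable_const _) hub
      _ = (prior G).toReal * Real.exp (t * (-hG + δ)) := by
          rw [setIntegral_const]; rfl
      _ ≤ 1 * Real.exp (t * (-hG + δ)) :=
          mul_le_mul_of_nonneg_right hG1 (Real.exp_pos _).le
      _ = _ := one_mul _
  have lowerI : ∀ δ : ℝ, 0 < δ → δ < hG → ∀ t : ℕ, 1 ≤ t →
      (∀ θ ∈ G, |Real.log (R t θ ω) / t - (-h θ)| < δ) →
      IntegrableOn (fun θ => R t θ ω) G prior →
      Real.exp (t * (-hG - 2*δ)) * (prior (G ∩ {θ | h θ < hG + δ})).toReal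
        ≤ ∫ θ in G, R t θ ω ∂prior := by
    intro δ hδ hδG t ht1 hbd hint
    set A := G ∩ {θ | h θ < hG + δ} with hAdef
    have hAmeas : MeasurableSet A := hGmeas.inter (measurableSet_lt hhmeas measurable_const)
    have ht0 : (0:ℝ) < t := by exact_mod_cast ht1
    have hGle' : ∀ᵐ θ ∂prior.restrict A, hG ≤ h θ :=
      ae_mono (Measure.restrict_mono Set.inter_subset_left le_rfl) hG_le
    have hlb : ∀ᵐ θ ∂prior.restrict A, Real.exp (t * (-hG - 2*δ)) ≤ R t θ ω := by
      filter_upwards [hGle', ae_restrict_mem hAmeas] with θ hθ1 hθA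
      obtain ⟨hθG, hθlt⟩ := hθA
      have hb := abs_lt.mp (hbd θ hθG)
      have hupper : Real.log (R t θ ω) / t < -h θ + δ := by linarith [hb.2]
      have hneg : Real.log (R t θ ω) < 0 := by
        have h5 : Real.log (R t θ ω) / t < 0 := lt_of_lt_of_le hupper (by linarith)
        have h6 := (div_lt_iff₀ ht0).mp h5
        simpa using h6
      have hpos : 0 < R t θ ω := by
        rcases (hRnn t θ ω).eq_or_lt with h0 | hp
        · exfalso; rw [← h0, Real.log_zero] at hneg; exact lt_irrefl 0 hneg
        · exact hp
      have hlow : -h θ - δ < Real.log (R t θ ω) / t := by linarith [hb.1]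
      have h7 : t * (-hG - 2*δ) < Real.log (R t θ ω) := by
        have h8 := (lt_div_iff₀ ht0).mp hlow
        have hθlt' : h θ < hG + δ := hθlt
        nlinarith [mul_lt_mul_of_pos_right (show -hG - 2*δ < -h θ - δ by linarith) ht0]
      calc Real.exp (t * (-hG - 2*δ)) ≤ Real.exp (Real.log (R t θ ω)) :=
            Real.exp_le_exp.mpr h7.le
        _ = R t θ ω := Real.exp_log hpos
    calc Real.exp (t * (-hG - 2*δ)) * (prior A).toReal
        = ∫ _ in A, Real.exp (t * (-hG - 2*δ)) ∂prior := by
          rw [setIntegral_const]; rw [smul_eq_mul, mul_comm]; rfl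
      _ ≤ ∫ θ in A, R t θ ω ∂prior :=
          integral_mono_ae (integrable_const _) (hint.mono_set Set.inter_subset_left) hlb
      _ ≤ ∫ θ in G, R t θ ω ∂prior :=
          setIntegral_mono_set hint (Eventually.of_forall fun θ => hRnn t θ ω)
            (HasSubset.Subset.eventuallyLE Set.inter_subset_left)
  have upper : ∀ ε : ℝ, 0 < ε → ∀ᶠ t : ℕ in atTop,
      Real.log (∫ θ in G, R t θ ω ∂prior) / t ≤ -hG + ε := by
    intro ε hε
    filter_upwards [hest (ε/2) (by positivity)] with t ht
    obtain ⟨ht1, hbd⟩ := ht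
    have ht0 : (0:ℝ) < t := by exact_mod_cast ht1
    obtain ⟨hint, hub⟩ := upperI (ε/2) (by positivity) t ht1 hbd
    have hInn : 0 ≤ ∫ θ in G, R t θ ω ∂prior :=
      integral_nonneg fun θ => hRnn t θ ω
    rcases hInn.eq_or_lt with hI0 | hIpos
    · by_cases hcase : hG < ε
      · rw [← hI0, Real.log_zero, zero_div]; linarith
      · push_neg at hcase
        exfalso
        have hlb := lowerI (ε/2) (by positivity) (by linarith) t ht1 hbd hint
        have hp := posA (ε/2) (by positivity)
        nlinarith [Real.exp_pos ((t:ℝ) * (-hG - 2*(ε/2)))]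
    · have hlog : Real.log (∫ θ in G, R t θ ω ∂prior) ≤ t * (-hG + ε/2) := by
        calc Real.log (∫ θ in G, R t θ ω ∂prior)
            ≤ Real.log (Real.exp (t * (-hG + ε/2))) := Real.log_le_log hIpos hub
          _ = _ := Real.log_exp _
      rw [div_le_iff₀ ht0]
      nlinarith
  have lower : 0 < hG → ∃ b : ℝ, ∀ᶠ t : ℕ in atTop,
      b ≤ Real.log (∫ θ in G, R t θ ω ∂prior) / t := by
    intro hpos
    set δ := hG/2 with hδdef
    set c := (prior (G ∩ {θ | h θ < hG + δ})).toReal with hcdef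
    have hcpos : 0 < c := posA δ (by positivity)
    refine ⟨-hG - 2*δ - |Real.log c|, ?_⟩
    filter_upwards [hest δ (by positivity)] with t ht
    obtain ⟨ht1, hbd⟩ := ht
    have ht0 : (0:ℝ) < t := by exact_mod_cast ht1
    have ht1' : (1:ℝ) ≤ t := by exact_mod_cast ht1
    obtain ⟨hint, _⟩ := upperI δ (by positivity) t ht1 hbd
    have hlb := lowerI δ (by positivity) (by rw [hδdef]; linarith) t ht1 hbd hint
    have hIpos : 0 < ∫ θ in G, R t θ ω ∂prior :=
      lt_of_lt_of_le (by positivity) hlb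
    have hlog : t * (-hG - 2*δ) + Real.log c ≤ Real.log (∫ θ in G, R t θ ω ∂prior) := by
      have h9 := Real.log_le_log (by positivity) hlb
      rwa [Real.log_mul (Real.exp_ne_zero _) (ne_of_gt hcpos), Real.log_exp] at h9
    rw [le_div_iff₀ ht0]
    have h10 : -|Real.log c| ≤ Real.log c := neg_abs_le _
    nlinarith [abs_nonneg (Real.log c)]
  rw [limsup_eq]
  by_cases hbdd : BddBelow {a : ℝ | ∀ᶠ t : ℕ in atTop,
      Real.log (∫ θ in G, R t θ ω ∂prior) / t ≤ a}
  · apply le_of_forall_pos_le_add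
    intro ε hε
    exact csInf_le hbdd (upper ε hε)
  · rw [Real.sInf_of_not_bddBelow hbdd]
    rcases hGnn.eq_or_lt with h0 | hpos
    · rw [← h0, neg_zero]
    · exfalso
      obtain ⟨b, hb⟩ := lower hpos
      refine hbdd ⟨b, fun a ha => ?_⟩
      obtain ⟨t, h1, h2⟩ := (hb.and ha).exists
      linarith
end

section
/- Let ρ_H denote Hellinger distance and D Kullback–Leibler divergence. Suppose Π_t is a sequence of probability measures on Θ, P^t and F_θ^t are the true and model one-step predictive distributions, ρ_H² (P^t, F_θ^t) ≤ d(θ) for a measurable function d, and for every ε > essinf d, Π_t({θ : ρ_H²(t,θ) > ε}) → 0 a.s. Then the mixture predictive distribution F^t_Π = ∫ F_θ^t dΠ_t(θ) satisfies limsup_t ρ_H²(P^t, F^t_Π) ≤ essinf d almost surely, using convexity of squared Hellinger distance and Jensen's inequality. -/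
open MeasureTheory Filter
open scoped ENNReal

/-- Squared Hellinger distance between two measures, `1 − ∫ √(dP dQ)`,
computed with densities w.r.t. the dominating measure `P + Q`. -/
noncomputable def hellingerSq {X : Type*} [MeasurableSpace X]
    (P Q : Measure X) : ℝ :=
  1 - ∫ x, Real.sqrt ((P.rnDeriv (P + Q) x).toReal * (Q.rnDeriv (P + Q) x).toReal)
        ∂(P + Q)

open scoped NNReal

namespace PredAux

variable {X Θ : Type*} [MeasurableSpace X] [MeasurableSpace Θ]

/-- Hellinger affinity, in `ℝ≥0∞`-integral form. -/
noncomputable def aff (P Q : Measure X) : ℝ≥0∞ :=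
  ∫⁻ x, (P.rnDeriv (P + Q) x * Q.rnDeriv (P + Q) x) ^ (1/2 : ℝ) ∂(P + Q)

lemma sqrt_mul_le_half_add (u v : ℝ≥0∞) : (u * v) ^ (1/2:ℝ) ≤ 2⁻¹ * (u + v) := by
  rcases eq_or_ne u ⊤ with hu | hu
  · rcases eq_or_ne v 0 with hv | hv
    · simp [hv]
    · have : (2:ℝ≥0∞)⁻¹ * (u + v) = ⊤ := by
        rw [hu]; simp [ENNReal.mul_eq_top]
      rw [this]; exact le_top
  · rcases eq_or_ne v ⊤ with hv | hv
    · rcases eq_or_ne u 0 with hu0 | hu0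
      · simp [hu0]
      · have : (2:ℝ≥0∞)⁻¹ * (u + v) = ⊤ := by
          rw [hv]; simp [ENNReal.mul_eq_top]
        rw [this]; exact le_top
    · lift u to ℝ≥0 using hu
      lift v to ℝ≥0 using hv
      rw [← ENNReal.coe_mul, ← ENNReal.coe_rpow_of_nonneg _ (by norm_num : (0:ℝ) ≤ 1/2),
        ← ENNReal.coe_add]
      have h2 : ((2:ℝ≥0∞))⁻¹ = ((2⁻¹ : ℝ≥0) : ℝ≥0∞) := by simp
      rw [h2, ← ENNReal.coe_mul, ENNReal.coe_le_coe]
      have := NNReal.geom_mean_le_arith_mean2_weighted (2⁻¹) (2⁻¹) u v (by rw [← two_mul, mul_inv_cancel₀ (two_ne_zero)])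
      have hm : (u * v) ^ (1/2:ℝ) = u ^ ((2⁻¹:ℝ≥0):ℝ) * v ^ ((2⁻¹:ℝ≥0):ℝ) := by
        rw [NNReal.mul_rpow]; norm_num
      rw [hm]
      calc u ^ ((2⁻¹:ℝ≥0):ℝ) * v ^ ((2⁻¹:ℝ≥0):ℝ) ≤ 2⁻¹ * u + 2⁻¹ * v := this
        _ = 2⁻¹ * (u + v) := by ring

lemma amgm (a u v : ℝ≥0∞) : (u * v) ^ (1/2:ℝ) ≤ 2⁻¹ * (a * u + a⁻¹ * v) := by
  rcases eq_or_ne a 0 with ha0 | ha0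
  · rcases eq_or_ne v 0 with hv | hv
    · simp [hv]
    · have h : 2⁻¹ * (a * u + a⁻¹ * v) = ⊤ := by
        rw [ha0]; simp [ENNReal.mul_eq_top, hv]
      rw [h]; exact le_top
  · rcases eq_or_ne a ⊤ with hat | hat
    · rcases eq_or_ne u 0 with hu | hu
      · simp [hu]
      · have h : 2⁻¹ * (a * u + a⁻¹ * v) = ⊤ := by
          rw [hat]; simp [ENNReal.mul_eq_top, hu]
        rw [h]; exact le_top
    · have huv : u * v = (a * u) * (a⁻¹ * v) := by
        rw [mul_mul_mul_comm, ENNReal.mul_inv_cancel ha0 hat, one_mul]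
      rw [huv]
      exact sqrt_mul_le_half_add _ _

lemma f2 (x y : ℝ≥0∞) (hx : x ≠ ⊤) : x * (y / x) ^ (1/2:ℝ) ≤ (x * y) ^ (1/2:ℝ) := by
  rcases eq_or_ne x 0 with h0 | h0
  · simp [h0]
  · apply le_of_eq
    rw [div_eq_mul_inv, ENNReal.mul_rpow_of_nonneg _ _ (by norm_num : (0:ℝ) ≤ 1/2),
      ENNReal.inv_rpow, ← ENNReal.rpow_neg,
      ENNReal.mul_rpow_of_nonneg x y (by norm_num : (0:ℝ) ≤ 1/2)]
    calc x * (y ^ (1/2:ℝ) * x ^ (-(1/2):ℝ))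
        = (x ^ (1:ℝ) * x ^ (-(1/2):ℝ)) * y ^ (1/2:ℝ) := by rw [ENNReal.rpow_one]; ring
      _ = x ^ (1/2:ℝ) * y ^ (1/2:ℝ) := by
          rw [← ENNReal.rpow_add _ _ h0 hx]; norm_num

lemma f3 (x y : ℝ≥0∞) (hy : y ≠ ⊤) : y * ((y / x) ^ (1/2:ℝ))⁻¹ ≤ (x * y) ^ (1/2:ℝ) := by
  rcases eq_or_ne y 0 with h0 | h0
  · simp [h0]
  · rw [← ENNReal.inv_rpow, ENNReal.inv_div (Or.inr hy) (Or.inr h0), mul_comm x y]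
    exact f2 y x hy

end PredAux

namespace PredAux2
open PredAux
variable {X Θ : Type*} [MeasurableSpace X] [MeasurableSpace Θ]

lemma habs_left (P Q : Measure X) : P ≪ P + Q :=
  Measure.absolutelyContinuous_of_le (Measure.le_add_right le_rfl)

lemma habs_right (P Q : Measure X) : Q ≪ P + Q :=
  Measure.absolutelyContinuous_of_le (Measure.le_add_left le_rfl)

lemma aff_le_one (P Q : Measure X) [IsProbabilityMeasure P] [IsProbabilityMeasure Q] :
    aff P Q ≤ 1 := by
  set ν := P + Q
  calc aff P Q ≤ ∫⁻ x, 2⁻¹ * (P.rnDeriv ν x + Q.rnDeriv ν x) ∂ν :=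
        lintegral_mono fun x => sqrt_mul_le_half_add _ _
    _ = 2⁻¹ * ∫⁻ x, (P.rnDeriv ν x + Q.rnDeriv ν x) ∂ν :=
        lintegral_const_mul _ ((Measure.measurable_rnDeriv _ _).add (Measure.measurable_rnDeriv _ _))
    _ = 2⁻¹ * ((∫⁻ x, P.rnDeriv ν x ∂ν) + ∫⁻ x, Q.rnDeriv ν x ∂ν) := by
        rw [lintegral_add_left (Measure.measurable_rnDeriv _ _)]
    _ ≤ 2⁻¹ * ((1:ℝ≥0∞) + 1) := by
        gcongr
        · exact (Measure.lintegral_rnDeriv_le).trans (by simp)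
        · exact (Measure.lintegral_rnDeriv_le).trans (by simp)
    _ = 1 := by rw [one_add_one_eq_two, ENNReal.inv_mul_cancel two_ne_zero ENNReal.ofNat_ne_top]

lemma hSq_eq (P Q : Measure X) [IsProbabilityMeasure P] [IsProbabilityMeasure Q] :
    hellingerSq P Q = 1 - (aff P Q).toReal := by
  unfold hellingerSq aff
  congr 1
  calc ∫ x, Real.sqrt ((P.rnDeriv (P + Q) x).toReal * (Q.rnDeriv (P + Q) x).toReal) ∂(P + Q)
      = ∫ x, ((P.rnDeriv (P + Q) x * Q.rnDeriv (P + Q) x) ^ (1/2:ℝ)).toReal ∂(P + Q) := by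
        refine integral_congr_ae (.of_forall fun x => ?_)
        simp only [← ENNReal.toReal_mul, Real.sqrt_eq_rpow, ENNReal.toReal_rpow]
    _ = (∫⁻ x, (P.rnDeriv (P + Q) x * Q.rnDeriv (P + Q) x) ^ (1/2:ℝ) ∂(P + Q)).toReal := by
        refine integral_toReal ?_ ?_
        · exact (((Measure.measurable_rnDeriv _ _).mul (Measure.measurable_rnDeriv _ _)).pow
            measurable_const).aemeasurable
        · filter_upwards [Measure.rnDeriv_lt_top P (P + Q), Measure.rnDeriv_lt_top Q (P + Q)]
            with x h1 h2
          exact ENNReal.rpow_lt_top_of_nonneg (by norm_num) (ENNReal.mul_lt_top h1 h2).ne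

lemma hSq_nonneg (P Q : Measure X) [IsProbabilityMeasure P] [IsProbabilityMeasure Q] :
    0 ≤ hellingerSq P Q := by
  rw [hSq_eq]
  have h := ENNReal.toReal_mono ENNReal.one_ne_top (aff_le_one P Q)
  simp only [ENNReal.toReal_one] at h
  linarith

lemma hSq_le_one (P Q : Measure X) [IsProbabilityMeasure P] [IsProbabilityMeasure Q] :
    hellingerSq P Q ≤ 1 := by
  rw [hSq_eq]
  have := ENNReal.toReal_nonneg (a := aff P Q)
  linarith

lemma prob_bind (μ : Measure Θ) [IsProbabilityMeasure μ] (Q : Θ → Measure X)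
    (hQm : Measurable Q) (hQ : ∀ θ, IsProbabilityMeasure (Q θ)) :
    IsProbabilityMeasure (μ.bind Q) := by
  constructor
  rw [Measure.bind_apply MeasurableSet.univ hQm.aemeasurable]
  simp [measure_univ]

lemma step1 (P Q : Measure X) [IsProbabilityMeasure P] [IsProbabilityMeasure Q]
    (g : X → ℝ≥0∞) (hg : Measurable g) :
    aff P Q ≤ 2⁻¹ * ((∫⁻ x, g x ∂P) + ∫⁻ x, (g x)⁻¹ ∂Q) := by
  set ν := P + Q
  calc aff P Q ≤ ∫⁻ x, 2⁻¹ * (g x * P.rnDeriv ν x + (g x)⁻¹ * Q.rnDeriv ν x) ∂ν :=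
        lintegral_mono fun x => amgm _ _ _
    _ = 2⁻¹ * ∫⁻ x, (g x * P.rnDeriv ν x + (g x)⁻¹ * Q.rnDeriv ν x) ∂ν :=
        lintegral_const_mul _ (((hg.mul (Measure.measurable_rnDeriv _ _))).add
          ((hg.inv).mul (Measure.measurable_rnDeriv _ _)))
    _ = 2⁻¹ * ((∫⁻ x, g x * P.rnDeriv ν x ∂ν) + ∫⁻ x, (g x)⁻¹ * Q.rnDeriv ν x ∂ν) := by
        rw [lintegral_add_left (f := fun x => g x * P.rnDeriv ν x) (hg.mul (Measure.measurable_rnDeriv _ _))]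
    _ = 2⁻¹ * ((∫⁻ x, g x ∂P) + ∫⁻ x, (g x)⁻¹ ∂Q) := by
        congr 1
        rw [show (∫⁻ x, g x * P.rnDeriv ν x ∂ν) = ∫⁻ x, P.rnDeriv ν x * g x ∂ν from
            lintegral_congr fun x => mul_comm _ _,
          show (∫⁻ x, (g x)⁻¹ * Q.rnDeriv ν x ∂ν) = ∫⁻ x, Q.rnDeriv ν x * (g x)⁻¹ ∂ν from
            lintegral_congr fun x => mul_comm _ _,
          MeasureTheory.lintegral_rnDeriv_mul (habs_left P Q) hg.aemeasurable,
          MeasureTheory.lintegral_rnDeriv_mul (habs_right P Q) (f := fun x => (g x)⁻¹) hg.inv.aemeasurable]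

lemma jensen (P : Measure X) [IsProbabilityMeasure P] (μ : Measure Θ) [IsProbabilityMeasure μ]
    (Q : Θ → Measure X) (hQm : Measurable Q) (hQ : ∀ θ, IsProbabilityMeasure (Q θ)) :
    ∫⁻ θ, aff P (Q θ) ∂μ ≤ aff P (μ.bind Q) := by
  haveI := prob_bind μ Q hQm hQ
  set ν := P + μ.bind Q with hν
  set p := P.rnDeriv ν with hp
  set q := (μ.bind Q).rnDeriv ν with hq
  set g : X → ℝ≥0∞ := fun x => (q x / p x) ^ (1/2:ℝ) with hgdef
  have hgm : Measurable g :=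
    ((Measure.measurable_rnDeriv _ _).div (Measure.measurable_rnDeriv _ _)).pow measurable_const
  have hC : (∫⁻ x, g x ∂P) ≤ aff P (μ.bind Q) := by
    rw [← MeasureTheory.lintegral_rnDeriv_mul (habs_left P (μ.bind Q)) hgm.aemeasurable]
    refine lintegral_mono_ae ?_
    filter_upwards [Measure.rnDeriv_lt_top P ν] with x hx
    exact f2 (p x) (q x) hx.ne
  have hD : (∫⁻ x, (g x)⁻¹ ∂(μ.bind Q)) ≤ aff P (μ.bind Q) := by
    rw [← MeasureTheory.lintegral_rnDeriv_mul (habs_right P (μ.bind Q)) (f := fun x => (g x)⁻¹) hgm.inv.aemeasurable]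
    refine lintegral_mono_ae ?_
    filter_upwards [Measure.rnDeriv_lt_top (μ.bind Q) ν] with x hx
    exact f3 (p x) (q x) hx.ne
  have hI : Measurable fun θ => ∫⁻ x, (g x)⁻¹ ∂(Q θ) :=
    (Measure.measurable_lintegral hgm.inv).comp hQm
  calc ∫⁻ θ, aff P (Q θ) ∂μ
      ≤ ∫⁻ θ, 2⁻¹ * ((∫⁻ x, g x ∂P) + ∫⁻ x, (g x)⁻¹ ∂(Q θ)) ∂μ := by
        refine lintegral_mono fun θ => ?_
        haveI := hQ θ
        exact step1 P (Q θ) g hgm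
    _ = 2⁻¹ * ((∫⁻ x, g x ∂P) + ∫⁻ θ, (∫⁻ x, (g x)⁻¹ ∂(Q θ)) ∂μ) := by
        rw [lintegral_const_mul _ (f := fun θ => (∫⁻ x, g x ∂P) + ∫⁻ x, (g x)⁻¹ ∂(Q θ)) (measurable_const.add hI),
          lintegral_add_left (f := fun _ => ∫⁻ x, g x ∂P) measurable_const, lintegral_const, measure_univ, mul_one]
    _ = 2⁻¹ * ((∫⁻ x, g x ∂P) + ∫⁻ x, (g x)⁻¹ ∂(μ.bind Q)) := by
        rw [Measure.lintegral_bind (f := fun x => (g x)⁻¹) hQm.aemeasurable hgm.inv.aemeasurable]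
    _ ≤ 2⁻¹ * (aff P (μ.bind Q) + aff P (μ.bind Q)) := by gcongr
    _ = aff P (μ.bind Q) := by
        rw [← two_mul, ← mul_assoc, ENNReal.inv_mul_cancel two_ne_zero ENNReal.ofNat_ne_top, one_mul]

end PredAux2

namespace PredAux3
open PredAux PredAux2
variable {X Θ : Type*} [MeasurableSpace X] [MeasurableSpace Θ]

lemma key (P : Measure X) [IsProbabilityMeasure P] (μ : Measure Θ) [IsProbabilityMeasure μ]
    (Q : Θ → Measure X) (hQm : Measurable Q) (hQ : ∀ θ, IsProbabilityMeasure (Q θ))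
    (c : ℝ) (hc : 0 ≤ c) (S : Set Θ) (hS : ∀ θ, θ ∉ S → hellingerSq P (Q θ) ≤ c) :
    hellingerSq P (μ.bind Q) ≤ c + (μ S).toReal := by
  haveI := prob_bind μ Q hQm hQ
  rcases le_or_gt 1 c with h1c | h1c
  · have h1 := hSq_le_one P (μ.bind Q)
    have h2 := ENNReal.toReal_nonneg (a := μ S)
    linarith
  · set S' := toMeasurable μ S with hS'def
    have hS'm : MeasurableSet S' := measurableSet_toMeasurable μ S
    have hsub : S ⊆ S' := subset_toMeasurable μ S
    have hmeasS' : μ S' = μ S := measure_toMeasurable S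
    have hlow : ∀ θ, (S'ᶜ).indicator (fun _ => ENNReal.ofReal (1 - c)) θ ≤ aff P (Q θ) := by
      intro θ
      by_cases hθ : θ ∈ S'ᶜ
      · rw [Set.indicator_of_mem hθ]
        haveI := hQ θ
        have h2 : hellingerSq P (Q θ) ≤ c := hS θ (fun h => hθ (hsub h))
        rw [hSq_eq] at h2
        exact ENNReal.ofReal_le_of_le_toReal (by linarith)
      · rw [Set.indicator_of_notMem hθ]; exact zero_le
    have hJ : ENNReal.ofReal (1 - c) * μ S'ᶜ ≤ aff P (μ.bind Q) := by
      calc ENNReal.ofReal (1 - c) * μ S'ᶜ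
          = ∫⁻ θ, (S'ᶜ).indicator (fun _ => ENNReal.ofReal (1 - c)) θ ∂μ := by
            rw [lintegral_indicator hS'm.compl, setLIntegral_const, mul_comm]
        _ ≤ ∫⁻ θ, aff P (Q θ) ∂μ := lintegral_mono hlow
        _ ≤ aff P (μ.bind Q) := jensen P μ Q hQm hQ
    have hcompl : μ S'ᶜ = 1 - μ S := by
      rw [measure_compl hS'm (measure_ne_top _ _), measure_univ, hmeasS']
    have hμS1 : μ S ≤ 1 := prob_le_one
    have haff_le : aff P (μ.bind Q) ≤ 1 := aff_le_one _ _
    have h3 : (ENNReal.ofReal (1 - c) * μ S'ᶜ).toReal ≤ (aff P (μ.bind Q)).toReal :=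
      ENNReal.toReal_mono (by exact (lt_of_le_of_lt haff_le ENNReal.one_lt_top).ne) hJ
    have h4 : (ENNReal.ofReal (1 - c) * μ S'ᶜ).toReal = (1 - c) * (1 - (μ S).toReal) := by
      rw [ENNReal.toReal_mul, ENNReal.toReal_ofReal (by linarith), hcompl,
        ENNReal.toReal_sub_of_le hμS1 ENNReal.one_ne_top, ENNReal.toReal_one]
    have h5 : (μ S).toReal ≤ 1 := by
      have := ENNReal.toReal_mono ENNReal.one_ne_top hμS1
      simpa using this
    have h6 := ENNReal.toReal_nonneg (a := μ S)
    rw [hSq_eq]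
    nlinarith [h3, h4, hc, h6, h5]

end PredAux3

open PredAux PredAux2 PredAux3 in
/-- Generalization performance of the posterior predictive distribution: if
`ρ_H²(P^t, F_θ^t) ≤ d(θ)` for a measurable `d` with essential infimum `m`
(w.r.t. the prior), and for every `ε > m` the posterior mass of
`{θ : ρ_H²(P^t, F_θ^t) > ε}` tends to `0` a.s., then the mixture predictive
distribution `F_Π^t = ∫ F_θ^t dΠ_t` satisfies
`limsup_t ρ_H²(P^t, F_Π^t) ≤ m` almost surely. -/
theorem predictive_hellinger_bound
    {Θ X Ω : Type*} [MeasurableSpace Θ] [MeasurableSpace X] [MeasurableSpace Ω]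
    (P : Measure Ω) [IsProbabilityMeasure P]
    (prior : Measure Θ) [IsProbabilityMeasure prior]
    -- the (random) posterior distributions, true predictive distributions,
    -- and model predictive distributions:
    (post : ℕ → Ω → Measure Θ) (hpost : ∀ t ω, IsProbabilityMeasure (post t ω))
    (Ptrue : ℕ → Ω → Measure X) (hPtrue : ∀ t ω, IsProbabilityMeasure (Ptrue t ω))
    (F : Θ → ℕ → Ω → Measure X) (hF : ∀ θ t ω, IsProbabilityMeasure (F θ t ω))
    (hFmeas : ∀ t ω, Measurable (fun θ => F θ t ω))
    (d : Θ → ℝ) (hdmeas : Measurable d)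
    -- `m` is the essential infimum of `d` w.r.t. the prior:
    (m : ℝ)
    (hm_le : ∀ᵐ θ ∂prior, m ≤ d θ)
    (hm_approx : ∀ ε > (0 : ℝ), prior {θ | d θ < m + ε} ≠ 0)
    -- domination of the squared Hellinger distances:
    (hdom : ∀ t ω θ, hellingerSq (Ptrue t ω) (F θ t ω) ≤ d θ)
    -- posterior concentration on low-Hellinger hypotheses:
    (hconc : ∀ ε : ℝ, m < ε → ∀ᵐ ω ∂P,
      Tendsto (fun t : ℕ =>
          post t ω {θ | ε < hellingerSq (Ptrue t ω) (F θ t ω)}) atTop (nhds 0)) :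
    ∀ᵐ ω ∂P,
      limsup (fun t : ℕ =>
          hellingerSq (Ptrue t ω) ((post t ω).bind (fun θ => F θ t ω))) atTop ≤ m := by
  -- `Ω` is nonempty since it carries a probability measure
  have hΩ : Nonempty Ω := by
    by_contra h
    rw [not_nonempty_iff] at h
    have h1 : P Set.univ = 1 := measure_univ
    rw [Set.univ_eq_empty_iff.2 h, measure_empty] at h1
    exact zero_ne_one h1
  obtain ⟨ω₀⟩ := hΩ
  -- `m` is nonnegative
  have hm0 : 0 ≤ m := by
    by_contra hm
    push_neg at hm
    refine hm_approx (-m) (by linarith) ?_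
    have hempty : {θ | d θ < m + -m} = ∅ := by
      ext θ
      simp only [Set.mem_setOf_eq, Set.mem_empty_iff_false, iff_false, not_lt]
      haveI := hPtrue 0 ω₀
      haveI := hF θ 0 ω₀
      have := (hSq_nonneg (Ptrue 0 ω₀) (F θ 0 ω₀)).trans (hdom 0 ω₀ θ)
      linarith
    rw [hempty, measure_empty]
  -- a.e. `ω`, concentration holds simultaneously for all rational-scale `ε`
  have hall : ∀ᵐ ω ∂P, ∀ n : ℕ, Tendsto (fun t : ℕ =>
      post t ω {θ | (m + 1/(n+1)) < hellingerSq (Ptrue t ω) (F θ t ω)}) atTop (nhds 0) :=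
    ae_all_iff.2 fun n => hconc _ (lt_add_of_pos_right m (by positivity))
  filter_upwards [hall] with ω hω
  have hbound : ∀ n : ℕ, limsup (fun t : ℕ =>
      hellingerSq (Ptrue t ω) ((post t ω).bind (fun θ => F θ t ω))) atTop ≤ m + 1/(n+1) := by
    intro n
    have hc0 : (0:ℝ) ≤ m + 1/(n+1) := by positivity
    have hkey : ∀ t, hellingerSq (Ptrue t ω) ((post t ω).bind (fun θ => F θ t ω)) ≤
        (m + 1/(n+1)) + ((post t ω)
          {θ | (m + 1/(n+1)) < hellingerSq (Ptrue t ω) (F θ t ω)}).toReal := by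
      intro t
      haveI := hpost t ω
      haveI := hPtrue t ω
      exact key (Ptrue t ω) (post t ω) _ (hFmeas t ω) (fun θ => hF θ t ω) _ hc0 _
        (fun θ hθ => not_lt.1 hθ)
    have htoReal : Tendsto (fun t : ℕ => ((post t ω)
        {θ | (m + 1/(n+1)) < hellingerSq (Ptrue t ω) (F θ t ω)}).toReal) atTop (nhds 0) := by
      have h := (ENNReal.tendsto_toReal (by simp : (0:ℝ≥0∞) ≠ ⊤)).comp (hω n)
      simpa [Function.comp_def] using h
    have htend : Tendsto (fun t : ℕ => (m + 1/(n+1)) + ((post t ω)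
        {θ | (m + 1/(n+1)) < hellingerSq (Ptrue t ω) (F θ t ω)}).toReal) atTop
        (nhds ((m + 1/(n+1)) + 0)) := tendsto_const_nhds.add htoReal
    calc limsup (fun t : ℕ =>
          hellingerSq (Ptrue t ω) ((post t ω).bind (fun θ => F θ t ω))) atTop
        ≤ limsup (fun t : ℕ => (m + 1/(n+1)) + ((post t ω)
            {θ | (m + 1/(n+1)) < hellingerSq (Ptrue t ω) (F θ t ω)}).toReal) atTop := by
          refine limsup_le_limsup (Eventually.of_forall hkey) ?_ ?_
          · refine isCoboundedUnder_le_of_le atTop (x := 0) fun t => ?_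
            haveI := hpost t ω
            haveI := hPtrue t ω
            haveI : IsProbabilityMeasure ((post t ω).bind (fun θ => F θ t ω)) :=
              prob_bind _ _ (hFmeas t ω) (fun θ => hF θ t ω)
            exact hSq_nonneg _ _
          · exact htend.isBoundedUnder_le
      _ = (m + 1/(n+1)) + 0 := htend.limsup_eq
      _ = m + 1/(n+1) := by ring
  have htendn : Tendsto (fun n : ℕ => m + 1/(n+1 : ℝ)) atTop (nhds (m + 0)) :=
    tendsto_const_nhds.add tendsto_one_div_add_atTop_nhds_zero_nat
  rw [add_zero] at htendn
  exact ge_of_tendsto' htendn hbound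
end
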